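/- Let n be a finite-dimensional real nilpotent Lie algebra with centre z := {X ∈ n | ∀ Y ∈ n, [X,Y] = 0}, and let D : n → n be a derivation (so D(z) ⊆ z automatically). Let ξ be a linear functional on n with ξ|_z ≠ 0. If there exists X ∈ n such that ξ ∘ exp(D) = ξ ∘ exp(ad X) as linear functionals on n, then the ℂ-linear extension (base change to ℂ) of the restriction D|_z : z → z has an eigenvalue belonging to 2πi·ℤ; in particular σ(D|_z) ∩ 2πi·ℤ ≠ ∅. -/

import Mathlib

open scoped TensorProduct

open scoped Matrix Nat

section AuxMatrix

open NormedSpace (exp)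

/-- If `N * J = J * P` then the same intertwining holds for matrix exponentials. -/
private theorem aux_exp_intertwine {𝕂 : Type*} [RCLike 𝕂] {m n : Type*} [Fintype m]
    [DecidableEq m] [Fintype n] [DecidableEq n]
    (N : Matrix m m 𝕂) (J : Matrix m n 𝕂) (P : Matrix n n 𝕂)
    (h : N * J = J * P) :
    exp N * J = J * exp P := by
  have hpow : ∀ k : ℕ, N ^ k * J = J * P ^ k := by
    intro k
    induction k with
    | zero => simp
    | succ k ih =>
        rw [pow_succ, pow_succ, Matrix.mul_assoc, h, ← Matrix.mul_assoc, ih, Matrix.mul_assoc]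
  letI : NormedRing (Matrix m m 𝕂) := Matrix.linftyOpNormedRing
  letI : NormedAlgebra 𝕂 (Matrix m m 𝕂) := Matrix.linftyOpNormedAlgebra
  letI : NormedRing (Matrix n n 𝕂) := Matrix.linftyOpNormedRing
  letI : NormedAlgebra 𝕂 (Matrix n n 𝕂) := Matrix.linftyOpNormedAlgebra
  haveI : @CompleteSpace (Matrix m m 𝕂) PseudoMetricSpace.toUniformSpace := by
    have := (inferInstance : CompleteSpace (m → m → 𝕂)); exact this
  haveI : @CompleteSpace (Matrix n n 𝕂) PseudoMetricSpace.toUniformSpace := by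
    have := (inferInstance : CompleteSpace (n → n → 𝕂)); exact this
  have h1 : Summable fun k : ℕ => (k !⁻¹ : 𝕂) • N ^ k := NormedSpace.expSeries_summable' N
  have h2 : Summable fun k : ℕ => (k !⁻¹ : 𝕂) • P ^ k := NormedSpace.expSeries_summable' P
  have c1 : Continuous fun M : Matrix m m 𝕂 => M * J :=
    continuous_id.matrix_mul continuous_const
  have c2 : Continuous fun M : Matrix n n 𝕂 => J * M :=
    continuous_const.matrix_mul continuous_id
  have e1 : exp N * J = ∑' k : ℕ, ((k !⁻¹ : 𝕂) • N ^ k) * J := by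
    rw [NormedSpace.exp_eq_tsum 𝕂]
    exact (h1.hasSum.map
      (AddMonoidHom.mk' (fun M : Matrix m m 𝕂 => M * J)
        (fun a b => Matrix.add_mul a b J)) c1).tsum_eq.symm
  have e2 : J * exp P = ∑' k : ℕ, J * ((k !⁻¹ : 𝕂) • P ^ k) := by
    rw [NormedSpace.exp_eq_tsum 𝕂]
    exact (h2.hasSum.map
      (AddMonoidHom.mk' (fun M : Matrix n n 𝕂 => J * M)
        (fun a b => Matrix.mul_add J a b)) c2).tsum_eq.symm
  rw [e1, e2]
  refine tsum_congr fun k => ?_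
  rw [Matrix.smul_mul, hpow, Matrix.mul_smul]

/-- An eigenvector of a matrix is an eigenvector of its exponential. -/
private theorem aux_exp_mulVec {𝕂 : Type*} [RCLike 𝕂] {m : Type*} [Fintype m] [DecidableEq m]
    (N : Matrix m m 𝕂) (x : m → 𝕂) (μ : 𝕂) (h : N *ᵥ x = μ • x) :
    exp N *ᵥ x = exp μ • x := by
  have hpow : ∀ k : ℕ, N ^ k *ᵥ x = μ ^ k • x := by
    intro k
    induction k with
    | zero => simp
    | succ k ih =>
        rw [pow_succ', ← Matrix.mulVec_mulVec, ih, Matrix.mulVec_smul, h, smul_smul, ← pow_succ]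
  letI : NormedRing (Matrix m m 𝕂) := Matrix.linftyOpNormedRing
  letI : NormedAlgebra 𝕂 (Matrix m m 𝕂) := Matrix.linftyOpNormedAlgebra
  haveI : @CompleteSpace (Matrix m m 𝕂) PseudoMetricSpace.toUniformSpace := by
    have := (inferInstance : CompleteSpace (m → m → 𝕂)); exact this
  have h1 : Summable fun k : ℕ => (k !⁻¹ : 𝕂) • N ^ k := NormedSpace.expSeries_summable' N
  have h2 : Summable fun k : ℕ => (k !⁻¹ : 𝕂) • μ ^ k := NormedSpace.expSeries_summable' μ
  have c1 : Continuous fun M : Matrix m m 𝕂 => M *ᵥ x :=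
    continuous_id.matrix_mulVec continuous_const
  have e1 : exp N *ᵥ x = ∑' k : ℕ, ((k !⁻¹ : 𝕂) • N ^ k) *ᵥ x := by
    rw [NormedSpace.exp_eq_tsum 𝕂]
    exact (h1.hasSum.map
      (AddMonoidHom.mk' (fun M : Matrix m m 𝕂 => M *ᵥ x)
        (fun a b => Matrix.add_mulVec a b x)) c1).tsum_eq.symm
  rw [e1, NormedSpace.exp_eq_tsum 𝕂, ← h2.tsum_smul_const]
  refine tsum_congr fun k => ?_
  rw [Matrix.smul_mulVec, hpow, smul_smul, smul_eq_mul]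

end AuxMatrix

set_option maxHeartbeats 1600000 in
set_option synthInstance.maxHeartbeats 400000 in
/-- Lemma 4.4: let `L` be a finite-dimensional real nilpotent Lie algebra with centre `z`, let
`D : L → L` be a derivation, and let `ξ` be a linear functional on `L` with `ξ|_z ≠ 0`.  If
there exists `X ∈ L` with `ξ ∘ exp D = ξ ∘ exp (ad X)` (the exponentials being computed, via
an arbitrary basis `b`, through the matrix exponential, which is independent of the choice),
then the complexification of `D|_z` has an eigenvalue in `2πi·ℤ`; i.e.
`σ(D|_z) ∩ 2πi·ℤ ≠ ∅` (stated here as: the complexified `D` has an eigenvector lying in the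
complexified centre, with eigenvalue in `2πi·ℤ`). -/
theorem eigenvalue_of_exp_in_coadjoint_orbit
    (L : Type*) [LieRing L] [LieAlgebra ℝ L] [FiniteDimensional ℝ L]
    [LieRing.IsNilpotent L]
    (D : L →ₗ[ℝ] L)
    (hD : ∀ x y : L, D ⁅x, y⁆ = ⁅D x, y⁆ + ⁅x, D y⁆)
    (ξ : Module.Dual ℝ L)
    (hξ : ∃ Z : L, (∀ Y : L, ⁅Z, Y⁆ = 0) ∧ ξ Z ≠ 0)
    (X : L) (d : ℕ) (b : Module.Basis (Fin d) ℝ L)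
    (hX : ∀ Y : L,
      ξ (Matrix.toLin b b (NormedSpace.exp (LinearMap.toMatrix b b D)) Y)
        = ξ (Matrix.toLin b b
            (NormedSpace.exp (LinearMap.toMatrix b b (LieAlgebra.ad ℝ L X))) Y)) :
    ∃ (μ : ℂ) (v : ℂ ⊗[ℝ] L), v ≠ 0 ∧
      v ∈ Submodule.baseChange ℂ (LieAlgebra.center ℝ L).toSubmodule ∧
      LinearMap.baseChange ℂ D v = μ • v ∧
      ∃ k : ℤ, μ = 2 * Real.pi * Complex.I * (k : ℂ) := by
  classical
  obtain ⟨Z0, hZ0c, hZ0⟩ := hξ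
  set Z : Submodule ℝ L := (LieAlgebra.center ℝ L).toSubmodule with hZdef
  -- membership in the centre
  have hmemZ : ∀ y : L, y ∈ Z ↔ ∀ x : L, ⁅x, y⁆ = 0 := by
    intro y
    exact LieModule.mem_maxTrivSubmodule ℝ L L y
  have hZ0mem : Z0 ∈ Z := by
    rw [hmemZ]
    intro x
    rw [← lie_skew, hZ0c x, neg_zero]
  -- D preserves the centre
  have hDZ : ∀ y ∈ Z, D y ∈ Z := by
    intro y hy
    rw [hmemZ] at hy ⊢
    intro x
    have h2 : (⁅y, x⁆ : L) = 0 := by rw [← lie_skew, hy x, neg_zero]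
    have h3 : (⁅y, D x⁆ : L) = 0 := by rw [← lie_skew, hy (D x), neg_zero]
    have h1 := hD y x
    rw [h2, map_zero, h3, add_zero] at h1
    rw [← lie_skew, ← h1, neg_zero]
  -- exp of ad X fixes central elements
  set MD := LinearMap.toMatrix b b D with hMDdef
  set MX := LinearMap.toMatrix b b (LieAlgebra.ad ℝ L X) with hMXdef
  have hreal : ∀ y ∈ Z, ξ (Matrix.toLin b b (NormedSpace.exp MD) y) = ξ y := by
    intro y hy
    have hadXy : LieAlgebra.ad ℝ L X y = 0 := by
      rw [LieAlgebra.ad_apply]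
      exact (hmemZ y).mp hy X
    have h0 : MX *ᵥ (b.repr y : Fin d → ℝ) = (0 : ℝ) • (b.repr y : Fin d → ℝ) := by
      rw [hMXdef, LinearMap.toMatrix_mulVec_repr, hadXy, map_zero, zero_smul]
      rfl
    have hfix : Matrix.toLin b b (NormedSpace.exp MX) y = y := by
      have hco : (b.repr (Matrix.toLin b b (NormedSpace.exp MX) y) : Fin d → ℝ)
          = (b.repr y : Fin d → ℝ) := by
        rw [← LinearMap.toMatrix_mulVec_repr b b, LinearMap.toMatrix_toLin,
          aux_exp_mulVec _ _ _ h0, NormedSpace.exp_zero, one_smul]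
      exact b.repr.injective (DFunLike.coe_injective hco)
    rw [hX y, hfix]
  -- complexification
  set S : (ℂ ⊗[ℝ] L) →ₗ[ℂ] (ℂ ⊗[ℝ] L) := LinearMap.baseChange ℂ D with hSdef
  set b' : Module.Basis (Fin d) ℂ (ℂ ⊗[ℝ] L) := Algebra.TensorProduct.basis ℂ b with hb'def
  haveI : FiniteDimensional ℂ (ℂ ⊗[ℝ] L) := b'.finiteDimensional_of_finite
  set N : Matrix (Fin d) (Fin d) ℂ := MD.map (algebraMap ℝ ℂ) with hNdef
  have hN : LinearMap.toMatrix b' b' S = N := LinearMap.toMatrix_baseChange ℂ D b b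
  -- exp commutes with complexification of matrices
  have hexpN : (NormedSpace.exp MD).map (algebraMap ℝ ℂ) = NormedSpace.exp N := by
    letI : NormedRing (Matrix (Fin d) (Fin d) ℝ) := Matrix.linftyOpNormedRing
    letI : NormedAlgebra ℝ (Matrix (Fin d) (Fin d) ℝ) := Matrix.linftyOpNormedAlgebra
    letI : NormedRing (Matrix (Fin d) (Fin d) ℂ) := Matrix.linftyOpNormedRing
    letI : NormedAlgebra ℝ (Matrix (Fin d) (Fin d) ℂ) := Matrix.linftyOpNormedAlgebra
    letI : NormedAlgebra ℚ (Matrix (Fin d) (Fin d) ℝ) := .restrictScalars ℚ ℝ _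
    haveI : @CompleteSpace (Matrix (Fin d) (Fin d) ℝ) PseudoMetricSpace.toUniformSpace := by
      have := (inferInstance : CompleteSpace (Fin d → Fin d → ℝ)); exact this
    have hc : Continuous fun M : Matrix (Fin d) (Fin d) ℝ => M.map (algebraMap ℝ ℂ) :=
      continuous_id.matrix_map Complex.continuous_ofReal
    have hmap := NormedSpace.map_exp ((algebraMap ℝ ℂ).mapMatrix) hc MD
    rw [RingHom.mapMatrix_apply, RingHom.mapMatrix_apply] at hmap
    exact hmap
  -- the big exponential operator on (ℂ ⊗[ℝ] L) is the base change of the real one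
  obtain ⟨AR, hARdef⟩ : ∃ f : L →ₗ[ℝ] L, f = Matrix.toLin b b (NormedSpace.exp MD) :=
    ⟨_, rfl⟩
  obtain ⟨Abig, hAbigdef⟩ : ∃ f : (ℂ ⊗[ℝ] L) →ₗ[ℂ] (ℂ ⊗[ℝ] L),
      f = Matrix.toLin b' b' (NormedSpace.exp N) := ⟨_, rfl⟩
  have hAbig : Abig = LinearMap.baseChange ℂ AR := by
    apply (LinearMap.toMatrix b' b').injective
    rw [hAbigdef, LinearMap.toMatrix_toLin, LinearMap.toMatrix_baseChange, hARdef,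
      LinearMap.toMatrix_toLin, hexpN]
  -- the complexified functional
  obtain ⟨phiC, hphiCdef⟩ : ∃ f : (ℂ ⊗[ℝ] L) →ₗ[ℂ] ℂ,
      f = (Algebra.TensorProduct.rid ℝ ℂ ℂ).toLinearMap.comp (LinearMap.baseChange ℂ ξ) :=
    ⟨_, rfl⟩
  have hphiC_tmul : ∀ (c : ℂ) (y : L), phiC (c ⊗ₜ[ℝ] y) = ξ y • c := by
    intro c y
    rw [hphiCdef, LinearMap.comp_apply, LinearMap.baseChange_tmul,
      AlgEquiv.toLinearMap_apply, Algebra.TensorProduct.rid_tmul]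
  set W : Submodule ℂ (ℂ ⊗[ℝ] L) := Z.baseChange ℂ with hWdef
  -- S preserves W
  have hSW : ∀ v ∈ W, S v ∈ W := by
    intro v hv
    rw [hWdef, Submodule.baseChange_eq_span] at hv
    refine Submodule.span_induction ?_ ?_ ?_ ?_ hv
    · rintro w ⟨y, hy, rfl⟩
      have : S ((TensorProduct.mk ℝ ℂ L 1) y) = (1 : ℂ) ⊗ₜ[ℝ] D y := by
        simp [hSdef, LinearMap.baseChange_tmul]
      rw [this]
      exact Submodule.tmul_mem_baseChange_of_mem 1 (hDZ y hy)
    · simp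
    · intro u v _ _ hu hv
      rw [map_add]; exact Submodule.add_mem _ hu hv
    · intro c u _ hu
      rw [map_smul]; exact Submodule.smul_mem _ c hu
  -- phiC ∘ Abig = phiC on W
  have hphiCAbig : ∀ v ∈ W, phiC (Abig v) = phiC v := by
    intro v hv
    rw [hWdef, Submodule.baseChange_eq_span] at hv
    refine Submodule.span_induction ?_ ?_ ?_ ?_ hv
    · rintro w ⟨y, hy, rfl⟩
      have h1 : Abig ((TensorProduct.mk ℝ ℂ L 1) y) = (1 : ℂ) ⊗ₜ[ℝ] AR y := by
        rw [hAbig]; simp [LinearMap.baseChange_tmul]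
      rw [h1]
      show phiC ((1 : ℂ) ⊗ₜ[ℝ] AR y) = phiC ((1 : ℂ) ⊗ₜ[ℝ] y)
      rw [hphiC_tmul, hphiC_tmul, hARdef]
      rw [hreal y hy]
    · simp
    · intro u v _ _ hu hv
      rw [map_add, map_add, map_add, hu, hv]
    · intro c u _ hu
      rw [map_smul, map_smul, map_smul, hu]
  -- restriction of S to W
  obtain ⟨T, hTdef⟩ : ∃ f : W →ₗ[ℂ] W, f = S.restrict hSW := ⟨_, rfl⟩
  obtain ⟨c, hcdef⟩ : ∃ e : Module.Basis (Fin (Module.finrank ℂ W)) ℂ W, e = Module.finBasis ℂ W :=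
    ⟨_, rfl⟩
  obtain ⟨P, hPdef⟩ : ∃ M, M = LinearMap.toMatrix c c T := ⟨_, rfl⟩
  obtain ⟨J, hJdef⟩ : ∃ M, M = LinearMap.toMatrix c b' W.subtype := ⟨_, rfl⟩
  have hcomp : S.comp W.subtype = W.subtype.comp T := by
    ext w
    simp [hTdef, LinearMap.restrict_coe_apply]
  have hJP : N * J = J * P := by
    rw [← hN, hPdef, hJdef, ← LinearMap.toMatrix_comp c b' b', ← LinearMap.toMatrix_comp c c b',
      hcomp]
  have hexpJP : NormedSpace.exp N * J = J * NormedSpace.exp P := aux_exp_intertwine _ _ _ hJP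
  obtain ⟨A, hAdef⟩ : ∃ f : W →ₗ[ℂ] W, f = Matrix.toLin c c (NormedSpace.exp P) := ⟨_, rfl⟩
  have h1 : Matrix.toLin c b' (NormedSpace.exp N * J) = Abig.comp W.subtype := by
    rw [Matrix.toLin_mul c b' b', hJdef, Matrix.toLin_toMatrix, hAbigdef]
  have h2 : Matrix.toLin c b' (J * NormedSpace.exp P) = W.subtype.comp A := by
    rw [Matrix.toLin_mul c c b', hJdef, Matrix.toLin_toMatrix, hAdef]
  have hABS : Abig.comp W.subtype = W.subtype.comp A := by
    rw [← h1, ← h2, hexpJP]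
  have hψ : ∀ w : W, phiC ((A w : (ℂ ⊗[ℝ] L))) = phiC (w : (ℂ ⊗[ℝ] L)) := by
    intro w
    have h3 : Abig ((w : (ℂ ⊗[ℝ] L))) = (A w : (ℂ ⊗[ℝ] L)) := congrArg (fun f => f w) hABS
    rw [← h3]
    exact hphiCAbig _ (SetLike.coe_mem w)
  -- A commutes with T
  have hcommAT : A.comp T = T.comp A := by
    apply (LinearMap.toMatrix c c).injective
    rw [LinearMap.toMatrix_comp c c c, LinearMap.toMatrix_comp c c c, hAdef,
      LinearMap.toMatrix_toLin, ← hPdef]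
    exact aux_exp_intertwine P P P rfl
  obtain ⟨B, hBdef⟩ : ∃ f : W →ₗ[ℂ] W, f = A - LinearMap.id := ⟨_, rfl⟩
  by_cases hK : LinearMap.ker B = ⊥
  · -- then A - 1 is bijective on W, contradicting ξ Z0 ≠ 0
    exfalso
    have hinj : Function.Injective B := LinearMap.ker_eq_bot.mp hK
    have hsurj : Function.Surjective B :=
      LinearMap.injective_iff_surjective.mp hinj
    have hw0mem : (1 : ℂ) ⊗ₜ[ℝ] Z0 ∈ W := Submodule.tmul_mem_baseChange_of_mem 1 hZ0mem
    obtain ⟨u, hu⟩ := hsurj ⟨(1 : ℂ) ⊗ₜ[ℝ] Z0, hw0mem⟩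
    have hz : phiC ((1 : ℂ) ⊗ₜ[ℝ] Z0) = 0 := by
      have hcoe : (1 : ℂ) ⊗ₜ[ℝ] Z0 = (A u : (ℂ ⊗[ℝ] L)) - (u : (ℂ ⊗[ℝ] L)) := by
        have h5 := congrArg (fun w : W => (w : (ℂ ⊗[ℝ] L))) hu
        rw [hBdef] at h5
        simpa using h5.symm
      rw [hcoe, map_sub, hψ u, sub_self]
    rw [hphiC_tmul, Complex.real_smul, mul_one] at hz
    exact hZ0 (by exact_mod_cast hz)
  · -- the kernel of A - 1 is T-invariant and nonzero, take an eigenvector of T there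
    set K : Submodule ℂ W := LinearMap.ker B with hKdef
    have hTK : ∀ x ∈ K, T x ∈ K := by
      intro x hx
      have hx' : A x = x := by
        have h5 := LinearMap.mem_ker.mp hx
        rw [hBdef, LinearMap.sub_apply, LinearMap.id_apply, sub_eq_zero] at h5
        exact h5
      have hAT : A (T x) = T (A x) := congrArg (fun f => f x) hcommAT
      rw [LinearMap.mem_ker, hBdef, LinearMap.sub_apply, LinearMap.id_apply, hAT, hx', sub_self]
    haveI : Nontrivial (↥K) := Submodule.nontrivial_iff_ne_bot.mpr (by rw [hKdef]; exact hK)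
    obtain ⟨T', hT'def⟩ : ∃ f : Module.End ℂ K, f = T.restrict hTK := ⟨_, rfl⟩
    obtain ⟨μ, hμ⟩ := Module.End.exists_eigenvalue (K := ℂ) (V := ↥K) T'
    obtain ⟨u, hu⟩ := hμ.exists_hasEigenvector
    have hu0 : u ≠ 0 := hu.right
    have hTu : T' u = μ • u := hu.apply_eq_smul
    set w : W := (u : W) with hwdef
    have hw0 : w ≠ 0 := fun h => hu0 (Subtype.coe_injective h)
    have hTw : T w = μ • w := by
      have := congrArg (fun z : K => (z : W)) hTu
      simpa [hT'def, LinearMap.restrict_coe_apply] using this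
    have hPvec : P *ᵥ (c.repr w : Fin (Module.finrank ℂ W) → ℂ)
        = μ • (c.repr w : Fin (Module.finrank ℂ W) → ℂ) := by
      rw [hPdef, LinearMap.toMatrix_mulVec_repr, hTw, map_smul, Finsupp.coe_smul]
    have hAw : A w = NormedSpace.exp μ • w := by
      have hco : (c.repr (A w) : Fin (Module.finrank ℂ W) → ℂ)
          = (c.repr (NormedSpace.exp μ • w) : Fin (Module.finrank ℂ W) → ℂ) := by
        rw [← LinearMap.toMatrix_mulVec_repr c c, hAdef, LinearMap.toMatrix_toLin,
          aux_exp_mulVec _ _ _ hPvec, map_smul, Finsupp.coe_smul]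
      exact c.repr.injective (DFunLike.coe_injective hco)
    have hAw1 : A w = w := by
      have h5 := LinearMap.mem_ker.mp u.2
      rw [hBdef, LinearMap.sub_apply, LinearMap.id_apply, sub_eq_zero] at h5
      exact h5
    have hexpμ : NormedSpace.exp μ = 1 := by
      have h6 : NormedSpace.exp μ • w = (1 : ℂ) • w := by rw [one_smul, ← hAw, hAw1]
      exact smul_left_injective ℂ hw0 h6
    have hμ1 : Complex.exp μ = 1 := by rw [Complex.exp_eq_exp_ℂ]; exact hexpμ
    obtain ⟨k, hk⟩ := Complex.exp_eq_one_iff.mp hμ1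
    refine ⟨μ, (w : (ℂ ⊗[ℝ] L)), ?_, ?_, ?_, ⟨k, ?_⟩⟩
    · intro h
      exact hw0 (Subtype.coe_injective h)
    · exact SetLike.coe_mem w
    · have hSv : S ((w : W) : (ℂ ⊗[ℝ] L)) = ((T w : W) : (ℂ ⊗[ℝ] L)) := by
        rw [hTdef]
        exact (LinearMap.restrict_coe_apply S hSW w).symm
      rw [hSv, hTw]
      rfl
    · rw [hk]; ring
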